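/- Let $Y$ be absolutely continuous on $(0,1)$ with density $f_Y$. Define $g: (0,1]^2 \to (0,1]$ by $g(\theta_1, \theta_2) = \tfrac12(\theta_1^2 + \theta_2^2)$, and define on $(0,1]^2$ the density $f^{BBE}(\theta_1, \theta_2) := f_Y\big(\tfrac12(\theta_1^2+\theta_2^2)\big)\, h\big(\operatorname{atan2}(\theta_2, \theta_1) \mid \sqrt{\theta_1^2+\theta_2^2}\big)$, where $h(\phi \mid r)$ is the uniform density on the set of polar angles $\phi$ such that $(r\cos\phi, r\sin\phi) \in (0,1]^2$ (i.e., $h(\phi|r) = 2/\pi$ on $(0,\pi/2)$ for $0 < r \le 1$, and $h(\phi|r) = 1/(\phi_2 - \phi_1)$ on $(\phi_1, \phi_2)$ with $\phi_1 = \operatorname{atan2}(\sqrt{r^2-1}, 1)$, $\phi_2 = \operatorname{atan2}(1, \sqrt{r^2-1})$ for $1 < r \le \sqrt 2$). Then $f^{BBE}$ is a probability density on $(0,1]^2$, and if $\Theta \sim f^{BBE}$ then $g(\Theta)$ has density $f_Y$. -/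

import Mathlib

open MeasureTheory Set Real
open scoped ENNReal

lemma lintegral_polar (G : ℝ × ℝ → ℝ≥0∞) :
    ∫⁻ p, G p = ∫⁻ p in polarCoord.target, ENNReal.ofReal p.1 * G (polarCoord.symm p) := by
  set B : ℝ × ℝ → ℝ × ℝ →L[ℝ] ℝ × ℝ := fun p =>
    LinearMap.toContinuousLinearMap (Matrix.toLin (Module.Basis.finTwoProd ℝ) (Module.Basis.finTwoProd ℝ)
      !![cos p.2, -p.1 * sin p.2; sin p.2, p.1 * cos p.2]) with hB
  have A : ∀ p ∈ polarCoord.target, HasFDerivWithinAt polarCoord.symm (B p) polarCoord.target p :=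
    fun p _ => (hasFDerivAt_polarCoord_symm p).hasFDerivWithinAt
  have B_det : ∀ p, (B p).det = p.1 := by
    intro p
    conv_rhs => rw [← one_mul p.1, ← cos_sq_add_sin_sq p.2]
    simp only [hB, neg_mul, LinearMap.det_toContinuousLinearMap, LinearMap.det_toLin,
      Matrix.det_fin_two_of, sub_neg_eq_add]
    ring
  have hinj : InjOn polarCoord.symm polarCoord.target := polarCoord.symm.injOn
  have himg : polarCoord.symm '' polarCoord.target = polarCoord.source :=
    polarCoord.symm_image_target_eq_source
  calc ∫⁻ p, G p = ∫⁻ p in polarCoord.source, G p := by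
        rw [← setLIntegral_univ, Measure.restrict_congr_set polarCoord_source_ae_eq_univ.symm]
      _ = ∫⁻ p in polarCoord.symm '' polarCoord.target, G p := by rw [himg]
      _ = ∫⁻ p in polarCoord.target, ENNReal.ofReal |(B p).det| * G (polarCoord.symm p) :=
        lintegral_image_eq_lintegral_abs_det_fderiv_mul volume
          polarCoord.open_target.measurableSet A hinj G
      _ = ∫⁻ p in polarCoord.target, ENNReal.ofReal p.1 * G (polarCoord.symm p) := by
        apply setLIntegral_congr_fun polarCoord.open_target.measurableSet
        intro p hp
        dsimp only
        rw [B_det, abs_of_pos hp.1]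

/-- The uniform conditional density `h(φ | r)` on the polar angles `φ` with
`(r cos φ, r sin φ) ∈ (0,1]²` (here `atan2` values are expressed via `arctan` since all
relevant arguments are positive). -/
noncomputable def angleDens (r φ : ℝ) : ℝ :=
  if r ≤ 1 then
    (if 0 < φ ∧ φ < π / 2 then 2 / π else 0)
  else
    (if Real.arctan (Real.sqrt (r ^ 2 - 1)) < φ ∧
        φ < Real.arctan (1 / Real.sqrt (r ^ 2 - 1)) then
      1 / (Real.arctan (1 / Real.sqrt (r ^ 2 - 1)) - Real.arctan (Real.sqrt (r ^ 2 - 1)))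
    else 0)

lemma angleDens_nonneg (r φ : ℝ) : 0 ≤ angleDens r φ := by
  unfold angleDens
  split_ifs with h1 h2 h3
  · positivity
  · exact le_refl 0
  · rcases h3 with ⟨ha, hb⟩
    have : 0 < Real.arctan (1 / Real.sqrt (r ^ 2 - 1)) - Real.arctan (Real.sqrt (r ^ 2 - 1)) := by
      linarith
    positivity
  · exact le_refl 0

lemma measurable_angleDens : Measurable fun p : ℝ × ℝ => angleDens p.1 p.2 := by
  unfold angleDens
  have h1 : Measurable fun p : ℝ × ℝ => Real.arctan (Real.sqrt (p.1 ^ 2 - 1)) :=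
    (Real.continuous_arctan.comp (continuous_sqrt.comp
      ((continuous_fst.pow 2).sub continuous_const))).measurable
  have h2 : Measurable fun p : ℝ × ℝ => Real.arctan (1 / Real.sqrt (p.1 ^ 2 - 1)) :=
    Real.continuous_arctan.measurable.comp ((measurable_const.div
      (continuous_sqrt.comp ((continuous_fst.pow 2).sub continuous_const)).measurable))
  refine Measurable.ite (measurableSet_le measurable_fst measurable_const) ?_ ?_
  · refine Measurable.ite ?_ measurable_const measurable_const
    exact (measurableSet_lt measurable_const measurable_snd).inter
      (measurableSet_lt measurable_snd measurable_const)
  · refine Measurable.ite ?_ ?_ measurable_const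
    · exact (measurableSet_lt h1 measurable_snd).inter (measurableSet_lt measurable_snd h2)
    · exact measurable_const.div (h2.sub h1)

lemma inner_one {r : ℝ} (hr : 0 < r) (hr2 : r ^ 2 < 2) :
    ∫⁻ φ in Ioo (-π) π,
      (if (r * Real.cos φ, r * Real.sin φ) ∈ Ioc (0:ℝ) 1 ×ˢ Ioc (0:ℝ) 1
        then ENNReal.ofReal (angleDens r φ) else 0) = 1 := by
  have hmem : ∀ φ : ℝ, ((r * Real.cos φ, r * Real.sin φ) ∈ Ioc (0:ℝ) 1 ×ˢ Ioc (0:ℝ) 1 ↔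
      (0 < r * Real.cos φ ∧ r * Real.cos φ ≤ 1) ∧ 0 < r * Real.sin φ ∧ r * Real.sin φ ≤ 1) := by
    intro φ; simp [Set.prodMk_mem_set_prod_eq, Set.mem_Ioc, and_assoc]
  rcases le_or_gt r 1 with hr1 | hr1
  · -- small radius case
    have key : ∀ φ ∈ Ioo (-π) π,
        (if (r * Real.cos φ, r * Real.sin φ) ∈ Ioc (0:ℝ) 1 ×ˢ Ioc (0:ℝ) 1
          then ENNReal.ofReal (angleDens r φ) else 0)
        = Set.indicator (Ioo 0 (π/2)) (fun _ => ENNReal.ofReal (2/π)) φ := by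
      intro φ hφ
      by_cases hS : φ ∈ Ioo 0 (π/2)
      · have hc : 0 < Real.cos φ := Real.cos_pos_of_mem_Ioo ⟨by linarith [hS.1, pi_pos], hS.2⟩
        have hs : 0 < Real.sin φ := Real.sin_pos_of_pos_of_lt_pi hS.1 (by linarith [hS.2, pi_pos])
        have hST : (r * Real.cos φ, r * Real.sin φ) ∈ Ioc (0:ℝ) 1 ×ˢ Ioc (0:ℝ) 1 := by
          rw [hmem]
          refine ⟨⟨by positivity, by nlinarith [Real.cos_le_one φ]⟩,
            by positivity, by nlinarith [Real.sin_le_one φ]⟩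
        rw [if_pos hST, Set.indicator_of_mem hS]
        unfold angleDens
        rw [if_pos hr1, if_pos ⟨hS.1, hS.2⟩]
      · have hST : (r * Real.cos φ, r * Real.sin φ) ∉ Ioc (0:ℝ) 1 ×ˢ Ioc (0:ℝ) 1 := by
          rw [hmem]
          rintro ⟨⟨hc, -⟩, hs, -⟩
          have hc' : 0 < Real.cos φ := by nlinarith
          have hs' : 0 < Real.sin φ := by nlinarith
          apply hS
          constructor
          · by_contra h0
            push_neg at h0
            exact absurd (Real.sin_nonpos_of_nonpos_of_neg_pi_le h0 hφ.1.le) (by linarith)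
          · by_contra h0
            push_neg at h0
            have : Real.cos φ ≤ 0 :=
              Real.cos_nonpos_of_pi_div_two_le_of_le h0 (by linarith [hφ.2, pi_pos])
            linarith
        rw [if_neg hST, Set.indicator_of_notMem hS]
    have hsub : Ioo (0:ℝ) (π/2) ⊆ Ioo (-π) π := fun x hx =>
      ⟨by linarith [hx.1, pi_pos], by linarith [hx.2, pi_pos]⟩
    rw [setLIntegral_congr_fun measurableSet_Ioo key,
      lintegral_indicator measurableSet_Ioo, Measure.restrict_restrict measurableSet_Ioo,
      Set.inter_eq_left.mpr hsub,
      setLIntegral_const, Real.volume_Ioo, ← ENNReal.ofReal_mul (by positivity)]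
    rw [show (2/π) * (π/2 - 0) = 1 by field_simp; ring]
    exact ENNReal.ofReal_one
  · -- large radius case
    have hr21 : 0 < r^2 - 1 := by nlinarith
    set s := Real.sqrt (r^2-1) with hsdef
    have hs0 : 0 < s := Real.sqrt_pos.mpr hr21
    have hs2 : s^2 = r^2 - 1 := Real.sq_sqrt hr21.le
    have hs1 : s < 1 := by nlinarith
    set φ₁ := Real.arctan s with hφ₁def
    set φ₂ := Real.arctan (1/s) with hφ₂def
    have h1pos : 0 < φ₁ := by
      rw [hφ₁def, ← Real.arctan_zero]
      exact Real.arctan_strictMono hs0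
    have h2lt : φ₂ < π/2 := Real.arctan_lt_pi_div_two _
    have h12 : φ₁ < φ₂ := by
      apply Real.arctan_strictMono
      rw [lt_div_iff₀ hs0]; nlinarith
    have hsqrt : Real.sqrt (1 + s^2) = r := by
      rw [show 1+s^2 = r^2 by linarith, Real.sqrt_sq hr.le]
    have hcos1 : Real.cos φ₁ = 1/r := by rw [hφ₁def, Real.cos_arctan, hsqrt]
    have hsin2 : Real.sin φ₂ = 1/r := by
      have h1s : Real.sqrt (1 + (1/s)^2) = r/s := by
        rw [show 1+(1/s)^2 = (r/s)^2 by field_simp; linarith, Real.sqrt_sq (by positivity)]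
      rw [hφ₂def, Real.sin_arctan, h1s]
      field_simp
    have key : ∀ φ ∈ Ioo (-π) π,
        (if (r * Real.cos φ, r * Real.sin φ) ∈ Ioc (0:ℝ) 1 ×ˢ Ioc (0:ℝ) 1
          then ENNReal.ofReal (angleDens r φ) else 0)
        = Set.indicator (Ioo φ₁ φ₂) (fun _ => ENNReal.ofReal (1/(φ₂-φ₁))) φ := by
      intro φ hφ
      by_cases hS : φ ∈ Ioo φ₁ φ₂
      · have hφ0 : 0 < φ := h1pos.trans hS.1
        have hφπ : φ < π/2 := hS.2.trans h2lt
        have hc : 0 < Real.cos φ := Real.cos_pos_of_mem_Ioo ⟨by linarith [pi_pos], hφπ⟩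
        have hsn : 0 < Real.sin φ := Real.sin_pos_of_pos_of_lt_pi hφ0 (by linarith [pi_pos])
        have hcc : Real.cos φ < 1/r := by
          rw [← hcos1]
          exact Real.cos_lt_cos_of_nonneg_of_le_pi h1pos.le (by linarith [pi_pos]) hS.1
        have hss : Real.sin φ < 1/r := by
          rw [← hsin2]
          exact Real.strictMonoOn_sin ⟨by linarith [pi_pos], hφπ.le⟩
            ⟨by linarith [pi_pos], h2lt.le⟩ hS.2
        have hST : (r * Real.cos φ, r * Real.sin φ) ∈ Ioc (0:ℝ) 1 ×ˢ Ioc (0:ℝ) 1 := by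
          rw [hmem]
          constructor
          · constructor
            · positivity
            · have := mul_lt_mul_of_pos_left hcc hr
              rw [mul_one_div, div_self hr.ne'] at this
              exact this.le
          · constructor
            · positivity
            · have := mul_lt_mul_of_pos_left hss hr
              rw [mul_one_div, div_self hr.ne'] at this
              exact this.le
        rw [if_pos hST, Set.indicator_of_mem hS]
        unfold angleDens
        rw [if_neg (not_le.mpr hr1), if_pos (⟨hS.1, hS.2⟩ :
          Real.arctan (Real.sqrt (r ^ 2 - 1)) < φ ∧ φ < Real.arctan (1 / Real.sqrt (r ^ 2 - 1)))]
      · have h0 : angleDens r φ = 0 := by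
          unfold angleDens
          rw [if_neg (not_le.mpr hr1), if_neg]
          intro hcon
          exact hS ⟨hcon.1, hcon.2⟩
        rw [h0, Set.indicator_of_notMem hS]
        simp
    have hsub : Ioo φ₁ φ₂ ⊆ Ioo (-π) π := fun x hx =>
      ⟨by linarith [hx.1, pi_pos], by linarith [hx.2, pi_pos]⟩
    rw [setLIntegral_congr_fun measurableSet_Ioo key,
      lintegral_indicator measurableSet_Ioo, Measure.restrict_restrict measurableSet_Ioo,
      Set.inter_eq_left.mpr hsub,
      setLIntegral_const, Real.volume_Ioo,
      ← ENNReal.ofReal_mul (le_of_lt (by apply div_pos one_pos; linarith))]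
    rw [show (1/(φ₂-φ₁)) * (φ₂ - φ₁) = 1 by
      rw [one_div, inv_mul_cancel₀ (sub_ne_zero.mpr h12.ne')]]
    exact ENNReal.ofReal_one

/-- the BBE density
`f^{BBE}(θ₁,θ₂) = f_Y((θ₁²+θ₂²)/2) · h(atan2(θ₂,θ₁) | √(θ₁²+θ₂²))` is a probability
density on `(0,1]²`, and if `Θ ∼ f^{BBE}` then `g(Θ) = (Θ₁²+Θ₂²)/2` has density `f_Y`. -/
theorem stmt13
    (fY : ℝ → ℝ)
    (hfY_meas : Measurable fY)
    (hfY_nonneg : ∀ y, 0 ≤ fY y)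
    (hfY_supp : ∀ y, y ∉ Ioo (0:ℝ) 1 → fY y = 0)
    (hfY_int : ∫ y, fY y = 1)
    (S : Set (ℝ × ℝ)) (hS : S = Ioc (0:ℝ) 1 ×ˢ Ioc (0:ℝ) 1)
    (fBBE : ℝ × ℝ → ℝ)
    (hfBBE : ∀ θ : ℝ × ℝ, fBBE θ =
      Set.indicator S (fun θ : ℝ × ℝ =>
        fY ((θ.1 ^ 2 + θ.2 ^ 2) / 2) *
          angleDens (Real.sqrt (θ.1 ^ 2 + θ.2 ^ 2)) (Real.arctan (θ.2 / θ.1))) θ) :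
    (∀ θ, 0 ≤ fBBE θ) ∧ (∀ θ, θ ∉ S → fBBE θ = 0) ∧ (∫ θ, fBBE θ = 1) ∧
      Measure.map (fun θ : ℝ × ℝ => (θ.1 ^ 2 + θ.2 ^ 2) / 2)
          (volume.withDensity fun θ => ENNReal.ofReal (fBBE θ))
        = volume.withDensity fun y => ENNReal.ofReal (fY y) := by
  subst hS
  have hnn : ∀ θ, 0 ≤ fBBE θ := by
    intro θ
    rw [hfBBE θ]
    exact Set.indicator_nonneg
      (fun x _ => mul_nonneg (hfY_nonneg _) (angleDens_nonneg _ _)) θ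
  have hvanish : ∀ θ, θ ∉ Ioc (0:ℝ) 1 ×ˢ Ioc (0:ℝ) 1 → fBBE θ = 0 := by
    intro θ hθ
    rw [hfBBE θ, Set.indicator_of_notMem hθ]
  have hg_meas : Measurable fun θ : ℝ × ℝ => (θ.1 ^ 2 + θ.2 ^ 2) / 2 :=
    (((measurable_fst.pow_const 2).add (measurable_snd.pow_const 2)).div_const 2)
  have hfBBE_meas : Measurable fBBE := by
    rw [funext hfBBE]
    apply Measurable.indicator _ (measurableSet_Ioc.prod measurableSet_Ioc)
    apply Measurable.mul
    · exact hfY_meas.comp hg_meas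
    · exact measurable_angleDens.comp
        ((continuous_sqrt.comp ((continuous_fst.pow 2).add (continuous_snd.pow 2))).measurable.prodMk
          (Real.continuous_arctan.measurable.comp (measurable_snd.div measurable_fst)))
  -- KEY LEMMA
  have key : ∀ F : ℝ → ℝ≥0∞, Measurable F →
      (∫⁻ θ : ℝ × ℝ, F ((θ.1 ^ 2 + θ.2 ^ 2) / 2) * ENNReal.ofReal (fBBE θ))
        = ∫⁻ y, F y * ENNReal.ofReal (fY y) := by
    intro F hF
    rw [lintegral_polar (fun θ : ℝ × ℝ => F ((θ.1 ^ 2 + θ.2 ^ 2) / 2) * ENNReal.ofReal (fBBE θ))]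
    -- step B : pointwise rewrite on target
    have hstep : ∀ p ∈ polarCoord.target,
        ENNReal.ofReal p.1 *
          ((fun θ : ℝ × ℝ => F ((θ.1 ^ 2 + θ.2 ^ 2) / 2) * ENNReal.ofReal (fBBE θ))
            (polarCoord.symm p))
        = ENNReal.ofReal p.1 * F (p.1 ^ 2 / 2) * ENNReal.ofReal (fY (p.1 ^ 2 / 2)) *
            (if (p.1 * Real.cos p.2, p.1 * Real.sin p.2) ∈ Ioc (0:ℝ) 1 ×ˢ Ioc (0:ℝ) 1
              then ENNReal.ofReal (angleDens p.1 p.2) else 0) := by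
      rintro ⟨r, φ⟩ hp
      obtain ⟨hr, hφ⟩ := hp
      simp only [mem_Ioi] at hr
      simp only [mem_Ioo] at hφ
      have hsymm : polarCoord.symm (r, φ) = (r * Real.cos φ, r * Real.sin φ) := rfl
      have hsq : (r * Real.cos φ) ^ 2 + (r * Real.sin φ) ^ 2 = r ^ 2 := by
        linear_combination r ^ 2 * Real.sin_sq_add_cos_sq φ
      by_cases hmem : (r * Real.cos φ, r * Real.sin φ) ∈ Ioc (0:ℝ) 1 ×ˢ Ioc (0:ℝ) 1
      · rw [if_pos hmem]
        have hc : 0 < Real.cos φ := by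
          have := hmem.1.1
          simp only at this
          nlinarith
        have hφ2 : -(π/2) < φ ∧ φ < π/2 := by
          constructor
          · by_contra h0
            push_neg at h0
            have : Real.cos φ ≤ 0 := by
              rw [← Real.cos_neg]
              exact Real.cos_nonpos_of_pi_div_two_le_of_le (by linarith)
                (by linarith [hφ.1, pi_pos])
            linarith
          · by_contra h0
            push_neg at h0
            have : Real.cos φ ≤ 0 :=
              Real.cos_nonpos_of_pi_div_two_le_of_le h0 (by linarith [hφ.2, pi_pos])
            linarith
        have hBB : fBBE (r * Real.cos φ, r * Real.sin φ) = fY (r ^ 2 / 2) * angleDens r φ := by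
          rw [hfBBE _, Set.indicator_of_mem hmem]
          simp only
          rw [hsq, Real.sqrt_sq hr.le]
          congr 2
          rw [show r * Real.sin φ / (r * Real.cos φ) = Real.tan φ by
            rw [Real.tan_eq_sin_div_cos, mul_div_mul_left _ _ hr.ne']]
          exact Real.arctan_tan hφ2.1 hφ2.2
        simp only [hsymm, hBB, hsq]
        rw [ENNReal.ofReal_mul (hfY_nonneg _)]
        ring
      · rw [if_neg hmem]
        have h0 : fBBE (r * Real.cos φ, r * Real.sin φ) = 0 := by
          rw [hfBBE _, Set.indicator_of_notMem hmem]
        simp only [hsymm, h0, ENNReal.ofReal_zero, mul_zero]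
    rw [setLIntegral_congr_fun polarCoord.open_target.measurableSet
      hstep]
    -- step C : Tonelli
    have hcond : MeasurableSet {p : ℝ × ℝ |
        (p.1 * Real.cos p.2, p.1 * Real.sin p.2) ∈ Ioc (0:ℝ) 1 ×ˢ Ioc (0:ℝ) 1} := by
      have hcont : Continuous fun p : ℝ × ℝ => (p.1 * Real.cos p.2, p.1 * Real.sin p.2) :=
        (continuous_fst.mul (Real.continuous_cos.comp continuous_snd)).prodMk
          (continuous_fst.mul (Real.continuous_sin.comp continuous_snd))
      exact hcont.measurable (measurableSet_Ioc.prod measurableSet_Ioc)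
    have hImeas : Measurable fun p : ℝ × ℝ =>
        ENNReal.ofReal p.1 * F (p.1 ^ 2 / 2) * ENNReal.ofReal (fY (p.1 ^ 2 / 2)) *
          (if (p.1 * Real.cos p.2, p.1 * Real.sin p.2) ∈ Ioc (0:ℝ) 1 ×ˢ Ioc (0:ℝ) 1
            then ENNReal.ofReal (angleDens p.1 p.2) else 0) := by
      refine (((ENNReal.measurable_ofReal.comp measurable_fst).mul
        (hF.comp ((measurable_fst.pow_const 2).div_const 2))).mul
        (ENNReal.measurable_ofReal.comp
          (hfY_meas.comp ((measurable_fst.pow_const 2).div_const 2)))).mul ?_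
      exact Measurable.ite hcond (ENNReal.measurable_ofReal.comp measurable_angleDens)
        measurable_const
    have htgt : polarCoord.target = Ioi (0:ℝ) ×ˢ Ioo (-π) π := rfl
    rw [htgt, Measure.volume_eq_prod, ← Measure.prod_restrict,
      lintegral_prod _ hImeas.aemeasurable]
    -- step D : inner integral
    have hinner : ∀ r ∈ Ioi (0:ℝ),
        (∫⁻ φ in Ioo (-π) π,
          ENNReal.ofReal r * F (r ^ 2 / 2) * ENNReal.ofReal (fY (r ^ 2 / 2)) *
            (if (r * Real.cos φ, r * Real.sin φ) ∈ Ioc (0:ℝ) 1 ×ˢ Ioc (0:ℝ) 1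
              then ENNReal.ofReal (angleDens r φ) else 0))
        = ENNReal.ofReal r * F (r ^ 2 / 2) * ENNReal.ofReal (fY (r ^ 2 / 2)) := by
      intro r hr
      rw [mem_Ioi] at hr
      have hmφ : Measurable fun φ : ℝ =>
          (if (r * Real.cos φ, r * Real.sin φ) ∈ Ioc (0:ℝ) 1 ×ˢ Ioc (0:ℝ) 1
            then ENNReal.ofReal (angleDens r φ) else 0) := by
        refine Measurable.ite ?_
          (ENNReal.measurable_ofReal.comp
            (measurable_angleDens.comp (measurable_const.prodMk measurable_id))) measurable_const
        have hcont : Continuous fun φ : ℝ => (r * Real.cos φ, r * Real.sin φ) :=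
          (continuous_const.mul Real.continuous_cos).prodMk
            (continuous_const.mul Real.continuous_sin)
        exact hcont.measurable (measurableSet_Ioc.prod measurableSet_Ioc)
      rw [lintegral_const_mul _ hmφ]
      by_cases hz : fY (r ^ 2 / 2) = 0
      · simp [hz]
      · have hy : r ^ 2 / 2 ∈ Ioo (0:ℝ) 1 := by
          by_contra hcon
          exact hz (hfY_supp _ hcon)
        have h2 : r ^ 2 < 2 := by linarith [hy.2]
        rw [inner_one hr h2, mul_one]
    rw [setLIntegral_congr_fun measurableSet_Ioi hinner]
    -- step E : outer change of variables
    have himg : (fun r : ℝ => r ^ 2 / 2) '' Ioi 0 = Ioi 0 := by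
      ext y
      simp only [mem_image, mem_Ioi]
      constructor
      · rintro ⟨r, hr, rfl⟩; positivity
      · intro hy
        refine ⟨Real.sqrt (2 * y), Real.sqrt_pos.mpr (by linarith), ?_⟩
        rw [Real.sq_sqrt (by linarith)]; ring
    have hfd : ∀ x ∈ Ioi (0:ℝ), HasFDerivWithinAt (fun r : ℝ => r ^ 2 / 2)
        ((1 : ℝ →L[ℝ] ℝ).smulRight x) (Ioi 0) x := by
      intro x _
      have h1 : HasDerivAt (fun r : ℝ => r ^ 2 / 2) x x := by
        have := (hasDerivAt_pow 2 x).div_const 2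
        simpa using this
      exact (h1.hasDerivWithinAt).hasFDerivWithinAt
    have hinjg : InjOn (fun r : ℝ => r ^ 2 / 2) (Ioi 0) := by
      intro a ha b hb hab
      simp only [mem_Ioi] at ha hb
      simp only at hab
      nlinarith
    have hCV := lintegral_image_eq_lintegral_abs_det_fderiv_mul volume measurableSet_Ioi hfd hinjg
      (fun y => F y * ENNReal.ofReal (fY y))
    rw [himg] at hCV
    have hres : (∫⁻ y, F y * ENNReal.ofReal (fY y))
        = ∫⁻ y in Ioi (0:ℝ), F y * ENNReal.ofReal (fY y) := by
      rw [← lintegral_indicator measurableSet_Ioi]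
      apply lintegral_congr
      intro y
      by_cases hy : y ∈ Ioi (0:ℝ)
      · rw [Set.indicator_of_mem hy]
      · rw [Set.indicator_of_notMem hy, hfY_supp y ?_, ENNReal.ofReal_zero, mul_zero]
        simp only [mem_Ioi, not_lt] at hy
        intro hcon
        linarith [hcon.1]
    rw [hres, hCV]
    apply setLIntegral_congr_fun measurableSet_Ioi
    intro x hx
    dsimp only
    rw [ContinuousLinearMap.det_smulRight, ContinuousLinearMap.one_apply, one_mul, abs_of_pos hx]
    ring
  refine ⟨hnn, hvanish, ?_, ?_⟩
  · -- total integral is 1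
    have hfY_integrable : Integrable fY := by
      by_contra hcon
      rw [integral_undef hcon] at hfY_int
      norm_num at hfY_int
    have hone : (∫⁻ y, ENNReal.ofReal (fY y)) = 1 := by
      rw [← MeasureTheory.ofReal_integral_eq_lintegral_ofReal hfY_integrable
        (Filter.Eventually.of_forall hfY_nonneg), hfY_int, ENNReal.ofReal_one]
    have htot : (∫⁻ θ : ℝ × ℝ, ENNReal.ofReal (fBBE θ)) = 1 := by
      have h1 := key 1 measurable_one
      simp only [Pi.one_apply, one_mul] at h1
      rw [h1, hone]
    rw [MeasureTheory.integral_eq_lintegral_of_nonneg_ae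
      (Filter.Eventually.of_forall hnn) hfBBE_meas.aestronglyMeasurable, htot]
    simp
  · -- pushforward
    refine Measure.ext fun A hA => ?_
    rw [Measure.map_apply hg_meas hA, withDensity_apply _ (hg_meas hA), withDensity_apply _ hA]
    have hkA := key (A.indicator 1) (measurable_one.indicator hA)
    calc ∫⁻ θ in (fun θ : ℝ × ℝ => (θ.1 ^ 2 + θ.2 ^ 2) / 2) ⁻¹' A, ENNReal.ofReal (fBBE θ)
        = ∫⁻ θ : ℝ × ℝ, A.indicator 1 ((θ.1 ^ 2 + θ.2 ^ 2) / 2) * ENNReal.ofReal (fBBE θ) := by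
          rw [← lintegral_indicator (hg_meas hA)]
          apply lintegral_congr
          intro θ
          by_cases hθ : (θ.1 ^ 2 + θ.2 ^ 2) / 2 ∈ A
          · rw [Set.indicator_of_mem hθ, Set.indicator_of_mem
              (show θ ∈ (fun θ : ℝ × ℝ => (θ.1 ^ 2 + θ.2 ^ 2) / 2) ⁻¹' A from hθ),
              Pi.one_apply, one_mul]
          · rw [Set.indicator_of_notMem
              (show θ ∉ (fun θ : ℝ × ℝ => (θ.1 ^ 2 + θ.2 ^ 2) / 2) ⁻¹' A from hθ),
              Set.indicator_of_notMem hθ, zero_mul]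
      _ = ∫⁻ y, A.indicator 1 y * ENNReal.ofReal (fY y) := hkA
      _ = ∫⁻ y in A, ENNReal.ofReal (fY y) := by
          rw [← lintegral_indicator hA]
          apply lintegral_congr
          intro y
          by_cases hy : y ∈ A
          · rw [Set.indicator_of_mem hy, Set.indicator_of_mem hy, Pi.one_apply, one_mul]
          · rw [Set.indicator_of_notMem hy, Set.indicator_of_notMem hy, zero_mul]
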